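/- The second moment of Z ~ GABSN(α,β,λ) equals [1 + 15αβ + 3α²/2 + 105β²/2 − bδα(3+2λ²)/(1+λ²) − bδβ(15+20λ²+8λ⁴)/(1+λ²)²] / C(α,β,λ). -/

import Mathlib

open Real MeasureTheory Filter

/-- standard normal pdf -/
noncomputable def phi (z : ℝ) : ℝ := (Real.sqrt (2 * Real.pi))⁻¹ * Real.exp (-z ^ 2 / 2)

/-- standard normal cdf -/
noncomputable def Phi (z : ℝ) : ℝ := ∫ t in Set.Iic z, phi t

noncomputable def bconst : ℝ := Real.sqrt (2 / Real.pi)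

noncomputable def del (l : ℝ) : ℝ := l / Real.sqrt (1 + l ^ 2)

/-- GABSN normalizing constant -/
noncomputable def C (a β l : ℝ) : ℝ :=
  1 + 3 * a * β - a * bconst * del l - β * bconst * del l * (3 + 2 * l ^ 2) / (1 + l ^ 2)
    + a ^ 2 / 2 + 15 * β ^ 2 / 2

/-- GABSN density -/
noncomputable def f (a β l z : ℝ) : ℝ :=
  (((1 - a * z - β * z ^ 3) ^ 2 + 1) * phi z * Phi (l * z)) / C a β l

open Set

lemma integrable_pow_gauss (k : ℕ) {b : ℝ} (hb : 0 < b) :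
    Integrable fun x : ℝ => x ^ k * Real.exp (-b * x ^ 2) := by
  have hb2 : (0:ℝ) < b/2 := by linarith
  have hint : Integrable fun x : ℝ =>
      ((k.factorial : ℝ) * Real.exp (1/(2*b))) * Real.exp (-(b/2) * x ^ 2) :=
    (integrable_exp_neg_mul_sq hb2).const_mul _
  refine hint.mono ((continuous_pow k).mul (by fun_prop)).aestronglyMeasurable
    (.of_forall fun x => ?_)
  have h1 : |x| ^ k ≤ (k.factorial : ℝ) * Real.exp |x| := by
    have h := Real.pow_div_factorial_le_exp |x| (abs_nonneg x) k
    have hf : (0:ℝ) < k.factorial := by positivity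
    rw [div_le_iff₀ hf] at h
    linarith [h]
  have key : 2*b*|x| ≤ b^2*x^2 + 1 := by nlinarith [sq_nonneg (b*|x|-1), sq_abs x]
  have h2 : |x| ≤ b/2 * x^2 + 1/(2*b) := by
    have hb' : (0:ℝ) < 2*b := by linarith
    calc |x| = (2*b*|x|)/(2*b) := by field_simp
      _ ≤ (b^2*x^2+1)/(2*b) := by gcongr
      _ = b/2 * x^2 + 1/(2*b) := by field_simp
  have h3 : Real.exp (-b * x^2) ≤ Real.exp (1/(2*b)) * Real.exp (-(b/2)*x^2) / Real.exp |x| := by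
    rw [le_div_iff₀ (Real.exp_pos _), ← Real.exp_add, ← Real.exp_add]
    apply Real.exp_le_exp.2; linarith
  rw [Real.norm_eq_abs, Real.norm_eq_abs]
  have e1 : |x ^ k * Real.exp (-b * x ^ 2)| = |x|^k * Real.exp (-b*x^2) := by
    rw [abs_mul, abs_pow, Real.abs_exp]
  have e2 : |(k.factorial:ℝ) * Real.exp (1/(2*b)) * Real.exp (-(b/2) * x ^ 2)|
      = (k.factorial:ℝ) * Real.exp (1/(2*b)) * Real.exp (-(b/2) * x ^ 2) :=
    abs_of_nonneg (by positivity)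
  rw [e1, e2]
  calc |x| ^ k * Real.exp (-b * x ^ 2)
      ≤ ((k.factorial : ℝ) * Real.exp |x|) *
        (Real.exp (1/(2*b)) * Real.exp (-(b/2)*x^2) / Real.exp |x|) := by
        apply mul_le_mul h1 h3 (Real.exp_pos _).le (by positivity)
    _ = (k.factorial : ℝ) * Real.exp (1/(2*b)) * Real.exp (-(b/2) * x ^ 2) := by
        field_simp

lemma gauss_moment_rec (k : ℕ) {c : ℝ} (hc : 0 < c) :
    ∫ x : ℝ, x ^ (k+2) * Real.exp (-c * x ^ 2)
      = (k+1)/(2*c) * ∫ x : ℝ, x ^ k * Real.exp (-c * x ^ 2) := by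
  have hu : ∀ x : ℝ, HasDerivAt (fun y : ℝ => y ^ (k+1)) ((k+1) * x ^ k) x := by
    intro x; simpa using hasDerivAt_pow (k+1) x
  have hv : ∀ x : ℝ, HasDerivAt (fun y : ℝ => Real.exp (-c * y ^ 2))
      (-2*c*x * Real.exp (-c * x ^ 2)) x := by
    intro x
    have h1 : HasDerivAt (fun y : ℝ => -c * y ^ 2) (-2*c*x) x := by
      have := (hasDerivAt_pow 2 x).const_mul (-c)
      exact this.congr_deriv (by ring_nf)
    have := h1.exp
    convert this using 1; ring
  have huv' : Integrable (fun x : ℝ => x ^ (k+1) * (-2*c*x * Real.exp (-c * x ^ 2))) := by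
    have := (integrable_pow_gauss (k+2) hc).const_mul (-2*c)
    refine this.congr (Eventually.of_forall fun x => ?_); ring
  have hu'v : Integrable (fun x : ℝ => ((k:ℝ)+1) * x ^ k * Real.exp (-c * x ^ 2)) := by
    have := (integrable_pow_gauss k hc).const_mul ((k:ℝ)+1)
    refine this.congr (Eventually.of_forall fun x => ?_); ring
  have huv : Integrable (fun x : ℝ => x ^ (k+1) * Real.exp (-c * x ^ 2)) :=
    integrable_pow_gauss (k+1) hc
  have h := integral_mul_deriv_eq_deriv_mul_of_integrable (fun x _ => hu x) (fun x _ => hv x)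
    (by exact huv') (by exact hu'v) (by exact huv)
  have hL : ∫ x : ℝ, x ^ (k+1) * (-2*c*x * Real.exp (-c * x ^ 2))
      = (-2*c) * ∫ x : ℝ, x ^ (k+2) * Real.exp (-c * x ^ 2) := by
    rw [← integral_const_mul]
    congr 1; funext x; ring
  have hR : ∫ x : ℝ, ((k:ℝ)+1) * x ^ k * Real.exp (-c * x ^ 2)
      = ((k:ℝ)+1) * ∫ x : ℝ, x ^ k * Real.exp (-c * x ^ 2) := by
    rw [← integral_const_mul]
    congr 1; funext x; ring
  rw [hL, hR] at h
  have hc' : (2*c) ≠ 0 := by positivity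
  field_simp at h ⊢
  linarith [h]


lemma phi_eq (z : ℝ) : phi z = (Real.sqrt (2 * Real.pi))⁻¹ * Real.exp (-(1/2) * z ^ 2) := by
  rw [phi]; ring_nf

lemma continuous_phi : Continuous phi := by
  unfold phi; fun_prop

lemma phi_nonneg (z : ℝ) : 0 ≤ phi z := by
  unfold phi; positivity

lemma integrable_phi : Integrable phi := by
  have := (integrable_exp_neg_mul_sq (by norm_num : (0:ℝ) < 1/2)).const_mul
    ((Real.sqrt (2 * Real.pi))⁻¹)
  refine this.congr (Eventually.of_forall fun x => ?_)
  rw [phi_eq]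

lemma sqrt_two_pi_pos : 0 < Real.sqrt (2 * Real.pi) :=
  Real.sqrt_pos.2 (by positivity)

lemma integral_phi : ∫ z : ℝ, phi z = 1 := by
  have h : ∫ z : ℝ, phi z
      = (Real.sqrt (2 * Real.pi))⁻¹ * ∫ z : ℝ, Real.exp (-(1/2) * z ^ 2) := by
    rw [← integral_const_mul]; congr 1; funext z; rw [phi_eq]
  rw [h, integral_gaussian]
  rw [show (Real.pi / (1/2)) = 2 * Real.pi by ring]
  exact inv_mul_cancel₀ sqrt_two_pi_pos.ne'
lemma Phi_nonneg (z : ℝ) : 0 ≤ Phi z :=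
  setIntegral_nonneg measurableSet_Iic fun t _ => phi_nonneg t

lemma Phi_le_one (z : ℝ) : Phi z ≤ 1 := by
  rw [← integral_phi]
  exact setIntegral_le_integral integrable_phi (Eventually.of_forall phi_nonneg)

lemma Phi_add_Phi_neg (x : ℝ) : Phi x + Phi (-x) = 1 := by
  have h1 : Phi x = ∫ t in Set.Ioi (-x), phi t := by
    rw [Phi, ← integral_comp_neg_Iic x phi]
    congr 1; funext t; unfold phi; rw [neg_sq]
  rw [h1, Phi, add_comm, ← integral_phi]
  exact intervalIntegral.integral_Iic_add_Ioi integrable_phi.integrableOn integrable_phi.integrableOn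

lemma hasDerivAt_Phi (x : ℝ) : HasDerivAt Phi (phi x) x := by
  have key : Phi = fun z => (∫ t in (0:ℝ)..z, phi t) + Phi 0 := by
    funext z
    have h := intervalIntegral.integral_Iic_sub_Iic (a := (0:ℝ)) (b := z)
      integrable_phi.integrableOn integrable_phi.integrableOn
    rw [Phi, Phi]
    linarith [h]
  rw [key]
  have := intervalIntegral.integral_hasDerivAt_right
    (integrable_phi.intervalIntegrable (a := 0) (b := x))
    (continuous_phi.stronglyMeasurable.stronglyMeasurableAtFilter)
    continuous_phi.continuousAt
  exact this.add_const _

lemma continuous_Phi : Continuous Phi :=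
  continuous_iff_continuousAt.2 fun x => (hasDerivAt_Phi x).continuousAt

lemma integrable_pow_phi (k : ℕ) : Integrable fun z : ℝ => z ^ k * phi z := by
  have := (integrable_pow_gauss k (by norm_num : (0:ℝ) < 1/2)).const_mul
    ((Real.sqrt (2 * Real.pi))⁻¹)
  refine this.congr (Eventually.of_forall fun x => ?_)
  simp only [phi_eq]; ring

lemma integrable_pow_phi_Phi (k : ℕ) (l : ℝ) :
    Integrable fun z : ℝ => z ^ k * phi z * Phi (l * z) := by
  refine (integrable_pow_phi k).mono
    (((continuous_pow k).mul continuous_phi).mul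
      (continuous_Phi.comp (continuous_const.mul continuous_id))).aestronglyMeasurable
    (.of_forall fun z => ?_)
  rw [Real.norm_eq_abs, Real.norm_eq_abs, abs_mul]
  have h1 : |Phi (l*z)| ≤ 1 := abs_le.2 ⟨by linarith [Phi_nonneg (l*z)], Phi_le_one (l*z)⟩
  calc |z ^ k * phi z| * |Phi (l*z)| ≤ |z ^ k * phi z| * 1 := by
        exact mul_le_mul_of_nonneg_left h1 (abs_nonneg _)
    _ = |z ^ k * phi z| := mul_one _

lemma int_even_moment (m : ℕ) (l : ℝ) :
    ∫ z : ℝ, z ^ (2*m) * phi z * Phi (l * z)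
      = (1/2) * ∫ z : ℝ, z ^ (2*m) * phi z := by
  have hflip : ∫ z : ℝ, z ^ (2*m) * phi z * Phi (l * z)
      = ∫ z : ℝ, z ^ (2*m) * phi z * Phi (-(l * z)) := by
    rw [← integral_neg_eq_self (fun z : ℝ => z ^ (2*m) * phi z * Phi (l * z)) volume]
    congr 1; funext z
    have h1 : (-z) ^ (2*m) = z ^ (2*m) := (even_two_mul m).neg_pow z
    have h2 : phi (-z) = phi z := by unfold phi; rw [neg_sq]
    rw [h1, h2]; ring_nf
  have hsub : ∫ z : ℝ, z ^ (2*m) * phi z * Phi (-(l * z))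
      = (∫ z : ℝ, z ^ (2*m) * phi z) - ∫ z : ℝ, z ^ (2*m) * phi z * Phi (l * z) := by
    rw [← integral_sub (integrable_pow_phi (2*m)) (integrable_pow_phi_Phi (2*m) l)]
    congr 1; funext z
    have := Phi_add_Phi_neg (l * z)
    linear_combination (z ^ (2*m) * phi z) * this
  rw [hsub] at hflip
  linarith [hflip]

lemma phi_mul_phi (l z : ℝ) :
    phi z * phi (l * z) = (2*Real.pi)⁻¹ * Real.exp (-((1+l^2)/2) * z^2) := by
  have hs : Real.sqrt (2*Real.pi) * Real.sqrt (2*Real.pi) = 2*Real.pi :=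
    Real.mul_self_sqrt (by positivity)
  have he : Real.exp (-z^2/2) * Real.exp (-(l*z)^2/2)
      = Real.exp (-((1+l^2)/2) * z^2) := by
    rw [← Real.exp_add]; congr 1; ring
  unfold phi
  calc (Real.sqrt (2*Real.pi))⁻¹ * Real.exp (-z^2/2)
        * ((Real.sqrt (2*Real.pi))⁻¹ * Real.exp (-(l*z)^2/2))
      = (Real.sqrt (2*Real.pi) * Real.sqrt (2*Real.pi))⁻¹
        * (Real.exp (-z^2/2) * Real.exp (-(l*z)^2/2)) := by
        rw [mul_inv]; ring
    _ = (2*Real.pi)⁻¹ * Real.exp (-((1+l^2)/2) * z^2) := by rw [hs, he]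

lemma gauss_M0 {c : ℝ} (hc : 0 < c) :
    ∫ x : ℝ, x ^ 0 * Real.exp (-c * x ^ 2) = Real.sqrt (Real.pi / c) := by
  simp only [pow_zero, one_mul]
  exact integral_gaussian c

lemma gauss_M2 {c : ℝ} (hc : 0 < c) :
    ∫ x : ℝ, x ^ 2 * Real.exp (-c * x ^ 2) = 1/(2*c) * Real.sqrt (Real.pi / c) := by
  have h := gauss_moment_rec 0 hc
  rw [gauss_M0 hc] at h
  simpa using h

lemma gauss_M4 {c : ℝ} (hc : 0 < c) :
    ∫ x : ℝ, x ^ 4 * Real.exp (-c * x ^ 2) = 3/(4*c^2) * Real.sqrt (Real.pi / c) := by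
  rw [gauss_moment_rec 2 hc, gauss_M2 hc]
  push_cast
  field_simp; ring

lemma gauss_M6 {c : ℝ} (hc : 0 < c) :
    ∫ x : ℝ, x ^ 6 * Real.exp (-c * x ^ 2) = 15/(8*c^3) * Real.sqrt (Real.pi / c) := by
  rw [gauss_moment_rec 4 hc, gauss_M4 hc]
  push_cast
  field_simp; ring

lemma gauss_M8 {c : ℝ} (hc : 0 < c) :
    ∫ x : ℝ, x ^ 8 * Real.exp (-c * x ^ 2) = 105/(16*c^4) * Real.sqrt (Real.pi / c) := by
  rw [gauss_moment_rec 6 hc, gauss_M6 hc]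
  push_cast
  field_simp; ring

lemma int_pow_phi (k : ℕ) :
    ∫ z : ℝ, z ^ k * phi z
      = (Real.sqrt (2 * Real.pi))⁻¹ * ∫ x : ℝ, x ^ k * Real.exp (-(1/2) * x ^ 2) := by
  rw [← integral_const_mul]
  congr 1; funext z; simp only [phi_eq]; ring

lemma sqrt_pi_half : Real.sqrt (Real.pi / (1/2)) = Real.sqrt (2 * Real.pi) := by
  norm_num; ring_nf

lemma int_phi2 : ∫ z : ℝ, z ^ 2 * phi z = 1 := by
  rw [int_pow_phi, gauss_M2 (by norm_num : (0:ℝ) < 1/2), sqrt_pi_half]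
  field_simp

lemma int_phi4 : ∫ z : ℝ, z ^ 4 * phi z = 3 := by
  rw [int_pow_phi, gauss_M4 (by norm_num : (0:ℝ) < 1/2), sqrt_pi_half]
  have := sqrt_two_pi_pos
  field_simp; ring

lemma int_phi6 : ∫ z : ℝ, z ^ 6 * phi z = 15 := by
  rw [int_pow_phi, gauss_M6 (by norm_num : (0:ℝ) < 1/2), sqrt_pi_half]
  have := sqrt_two_pi_pos
  field_simp; ring

lemma int_phi8 : ∫ z : ℝ, z ^ 8 * phi z = 105 := by
  rw [int_pow_phi, gauss_M8 (by norm_num : (0:ℝ) < 1/2), sqrt_pi_half]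
  have := sqrt_two_pi_pos
  field_simp; ring

lemma hasDerivAt_phi (x : ℝ) : HasDerivAt phi (-x * phi x) x := by
  have h1 : HasDerivAt (fun z : ℝ => -z^2/2) (-x) x := by
    have := ((hasDerivAt_pow 2 x).neg).div_const 2
    refine this.congr_deriv ?_; push_cast; ring
  have h2 := h1.exp
  have h3 := h2.const_mul ((Real.sqrt (2 * Real.pi))⁻¹)
  have : phi = fun z => (Real.sqrt (2 * Real.pi))⁻¹ * Real.exp (-z^2/2) := rfl
  rw [this]
  refine h3.congr_deriv ?_
  simp only []; ring

lemma odd_ibp (l : ℝ) (k : ℕ) (p p' : ℝ → ℝ)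
    (hp : ∀ x, HasDerivAt p (p' x) x)
    (hcont : Continuous p)
    (hkey : ∀ x : ℝ, x * p x - p' x = x ^ k)
    (hint1 : Integrable fun z : ℝ => p z * phi z)
    (hint2 : Integrable fun z : ℝ => p z * phi z * phi (l * z)) :
    ∫ z : ℝ, z ^ k * phi z * Phi (l * z)
      = l * ∫ z : ℝ, p z * phi z * phi (l * z) := by
  set u : ℝ → ℝ := fun z => -(p z * phi z) with hu_def
  set v : ℝ → ℝ := fun z => Phi (l * z) with hv_def
  have hu : ∀ x, HasDerivAt u (x ^ k * phi x) x := by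
    intro x
    have := ((hp x).mul (hasDerivAt_phi x)).neg
    refine this.congr_deriv ?_
    rw [← hkey x]; ring
  have hv : ∀ x, HasDerivAt v (l * phi (l * x)) x := by
    intro x
    have hin : HasDerivAt (fun y : ℝ => l * y) l x := by
      simpa using (hasDerivAt_id x).const_mul l
    have := (hasDerivAt_Phi (l * x)).comp x hin
    refine this.congr_deriv ?_; ring
  have huv' : Integrable (u * fun x => l * phi (l * x)) := by
    have := hint2.const_mul (-l)
    refine this.congr (Eventually.of_forall fun x => ?_)
    simp only [Pi.mul_apply, hu_def]; ring
  have hu'v : Integrable ((fun x : ℝ => x ^ k * phi x) * v) := by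
    have := integrable_pow_phi_Phi k l
    refine this.congr (Eventually.of_forall fun x => ?_)
    simp only [Pi.mul_apply, hv_def]
  have huv : Integrable (u * v) := by
    refine hint1.mono ?_ (.of_forall fun z => ?_)
    · exact ((hcont.mul continuous_phi).neg.mul
        (continuous_Phi.comp (continuous_const.mul continuous_id))).aestronglyMeasurable
    · simp only [Pi.mul_apply, hu_def, hv_def, Real.norm_eq_abs, abs_mul, abs_neg]
      have h1 : |Phi (l * z)| ≤ 1 :=
        abs_le.2 ⟨by linarith [Phi_nonneg (l*z)], Phi_le_one (l*z)⟩
      have h2 : (0:ℝ) ≤ |p z| * |phi z| := by positivity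
      calc |p z| * |phi z| * |Phi (l * z)| ≤ |p z| * |phi z| * 1 :=
            mul_le_mul_of_nonneg_left h1 h2
        _ = |p z| * |phi z| := mul_one _
  have h := integral_mul_deriv_eq_deriv_mul_of_integrable (fun x _ => hu x) (fun x _ => hv x) huv' hu'v huv
  have hL : ∫ x : ℝ, u x * (l * phi (l * x)) = -l * ∫ z : ℝ, p z * phi z * phi (l * z) := by
    rw [← integral_const_mul]
    congr 1; funext x; simp only [hu_def]; ring
  have hR : ∫ x : ℝ, x ^ k * phi x * v x = ∫ z : ℝ, z ^ k * phi z * Phi (l * z) := rfl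
  rw [hL, hR] at h
  linarith [h]

lemma int_odd1 (l : ℝ) :
    ∫ z : ℝ, z ^ 1 * phi z * Phi (l * z)
      = l * ((2*Real.pi)⁻¹ * Real.sqrt (Real.pi / ((1+l^2)/2))) := by
  have hc : (0:ℝ) < (1+l^2)/2 := by positivity
  have hint2 : Integrable fun z : ℝ => (fun _ : ℝ => (1:ℝ)) z * phi z * phi (l * z) := by
    refine ((integrable_exp_neg_mul_sq hc).const_mul ((2*Real.pi)⁻¹)).congr
      (Eventually.of_forall fun z => ?_)
    show (2*Real.pi)⁻¹ * Real.exp (-((1+l^2)/2) * z^2) = 1 * phi z * phi (l * z)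
    rw [one_mul, phi_mul_phi]
  have h := odd_ibp l 1 (fun _ => 1) (fun _ => 0)
    (fun x => hasDerivAt_const x 1) continuous_const (fun x => by simp)
    (by simpa using integrable_phi) hint2
  rw [h]
  congr 1
  have hval : ∫ z : ℝ, (fun _ : ℝ => (1:ℝ)) z * phi z * phi (l * z)
      = (2*Real.pi)⁻¹ * ∫ z : ℝ, Real.exp (-((1+l^2)/2) * z^2) := by
    rw [← integral_const_mul]
    congr 1; funext z; rw [one_mul, phi_mul_phi]
  rw [hval, integral_gaussian]

lemma int_odd3 (l : ℝ) :
    ∫ z : ℝ, z ^ 3 * phi z * Phi (l * z)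
      = l * ((2*Real.pi)⁻¹ * ((1/(2*((1+l^2)/2)) + 2) * Real.sqrt (Real.pi / ((1+l^2)/2)))) := by
  have hc : (0:ℝ) < (1+l^2)/2 := by positivity
  have hp : ∀ x : ℝ, HasDerivAt (fun y : ℝ => y^2 + 2) (2*x) x := by
    intro x
    have := (hasDerivAt_pow 2 x).add_const 2
    refine this.congr_deriv ?_; push_cast; ring
  have hint1 : Integrable fun z : ℝ => (z^2 + 2) * phi z := by
    refine ((integrable_pow_phi 2).add (integrable_phi.const_mul 2)).congr
      (Eventually.of_forall fun z => ?_)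
    simp only [Pi.add_apply]; ring
  have heq : (fun z : ℝ => (z^2 + 2) * phi z * phi (l * z))
      = fun z : ℝ => (2*Real.pi)⁻¹ * (z^2 * Real.exp (-((1+l^2)/2) * z^2)
          + 2 * Real.exp (-((1+l^2)/2) * z^2)) := by
    funext z
    rw [show (z^2+2) * phi z * phi (l*z) = (z^2+2) * (phi z * phi (l*z)) by ring,
      phi_mul_phi]
    ring
  have hint2 : Integrable fun z : ℝ => (z^2 + 2) * phi z * phi (l * z) := by
    rw [heq]
    exact ((integrable_pow_gauss 2 hc).add
      ((integrable_exp_neg_mul_sq hc).const_mul 2)).const_mul _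
  have h := odd_ibp l 3 (fun y => y^2+2) (fun y => 2*y) hp
    ((continuous_pow 2).add continuous_const) (fun x => by ring) hint1 hint2
  rw [h]
  congr 1
  rw [heq, integral_const_mul,
    integral_add (integrable_pow_gauss 2 hc) ((integrable_exp_neg_mul_sq hc).const_mul 2),
    integral_const_mul, gauss_M2 hc, integral_gaussian]
  ring

lemma int_odd5 (l : ℝ) :
    ∫ z : ℝ, z ^ 5 * phi z * Phi (l * z)
      = l * ((2*Real.pi)⁻¹ * ((3/(4*((1+l^2)/2)^2) + 4/(2*((1+l^2)/2)) + 8)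
          * Real.sqrt (Real.pi / ((1+l^2)/2)))) := by
  have hc : (0:ℝ) < (1+l^2)/2 := by positivity
  have hp : ∀ x : ℝ, HasDerivAt (fun y : ℝ => y^4 + 4*y^2 + 8) (4*x^3 + 8*x) x := by
    intro x
    have := ((hasDerivAt_pow 4 x).add ((hasDerivAt_pow 2 x).const_mul 4)).add_const 8
    refine this.congr_deriv ?_; push_cast; ring
  have hint1 : Integrable fun z : ℝ => (z^4 + 4*z^2 + 8) * phi z := by
    refine (((integrable_pow_phi 4).add ((integrable_pow_phi 2).const_mul 4)).add
      (integrable_phi.const_mul 8)).congr (Eventually.of_forall fun z => ?_)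
    simp only [Pi.add_apply]; ring
  have heq : (fun z : ℝ => (z^4 + 4*z^2 + 8) * phi z * phi (l * z))
      = fun z : ℝ => (2*Real.pi)⁻¹ * (z^4 * Real.exp (-((1+l^2)/2) * z^2)
          + 4 * (z^2 * Real.exp (-((1+l^2)/2) * z^2))
          + 8 * Real.exp (-((1+l^2)/2) * z^2)) := by
    funext z
    rw [show (z^4+4*z^2+8) * phi z * phi (l*z) = (z^4+4*z^2+8) * (phi z * phi (l*z)) by ring,
      phi_mul_phi]
    ring
  have hint2 : Integrable fun z : ℝ => (z^4 + 4*z^2 + 8) * phi z * phi (l * z) := by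
    rw [heq]
    exact (((integrable_pow_gauss 4 hc).add
      ((integrable_pow_gauss 2 hc).const_mul 4)).add
      ((integrable_exp_neg_mul_sq hc).const_mul 8)).const_mul _
  have h := odd_ibp l 5 (fun y => y^4+4*y^2+8) (fun y => 4*y^3+8*y) hp
    (by continuity) (fun x => by ring) hint1 hint2
  rw [h]
  congr 1
  have iA : Integrable fun a : ℝ => a^4 * Real.exp (-((1+l^2)/2) * a^2)
      + 4 * (a^2 * Real.exp (-((1+l^2)/2) * a^2)) := by
    refine ((integrable_pow_gauss 4 hc).add
      ((integrable_pow_gauss 2 hc).const_mul 4)).congr (Eventually.of_forall fun a => ?_)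
    simp only [Pi.add_apply]
  rw [heq, integral_const_mul,
    integral_add iA ((integrable_exp_neg_mul_sq hc).const_mul 8),
    integral_add (integrable_pow_gauss 4 hc) ((integrable_pow_gauss 2 hc).const_mul 4),
    integral_const_mul, integral_const_mul, gauss_M2 hc, gauss_M4 hc, integral_gaussian]
  ring

lemma bconst_eq : bconst = 2 / Real.sqrt (2 * Real.pi) := by
  have h4 : (2:ℝ)/Real.pi = 4/(2*Real.pi) := by
    rw [div_eq_div_iff (by positivity) (by positivity)]; ring
  rw [bconst, h4, Real.sqrt_div (by norm_num : (0:ℝ) ≤ 4),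
    show Real.sqrt 4 = 2 by rw [show (4:ℝ) = 2^2 by norm_num, Real.sqrt_sq (by norm_num)]]

lemma odd_const (l : ℝ) :
    l * ((2*Real.pi)⁻¹ * Real.sqrt (Real.pi / ((1+l^2)/2))) = bconst * del l / 2 := by
  have hL : (0:ℝ) < 1 + l^2 := by positivity
  have hLs : (0:ℝ) < Real.sqrt (1 + l^2) := Real.sqrt_pos.2 hL
  have hS := sqrt_two_pi_pos
  have hSS : Real.sqrt (2*Real.pi) * Real.sqrt (2*Real.pi) = 2*Real.pi :=
    Real.mul_self_sqrt (by positivity)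
  have hLL : Real.sqrt (1+l^2) * Real.sqrt (1+l^2) = 1+l^2 :=
    Real.mul_self_sqrt hL.le
  have h1 : Real.pi / ((1+l^2)/2) = 2*Real.pi/(1+l^2) := by
    rw [div_eq_div_iff (by positivity) (by positivity)]; ring
  rw [h1, Real.sqrt_div (by positivity : (0:ℝ) ≤ 2*Real.pi), bconst_eq, del]
  have h2 : Real.sqrt 2 * Real.sqrt 2 = 2 := Real.mul_self_sqrt (by norm_num)
  have hp : Real.sqrt Real.pi * Real.sqrt Real.pi = Real.pi :=
    Real.mul_self_sqrt Real.pi_pos.le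
  field_simp
  linear_combination l*hSS

lemma even2 (l : ℝ) : ∫ z : ℝ, z ^ 2 * phi z * Phi (l * z) = 1/2 := by
  have h := int_even_moment 1 l
  norm_num at h
  rw [h, int_phi2]; norm_num

lemma even4 (l : ℝ) : ∫ z : ℝ, z ^ 4 * phi z * Phi (l * z) = 3/2 := by
  have h := int_even_moment 2 l
  norm_num at h
  rw [h, int_phi4]; norm_num

lemma even6 (l : ℝ) : ∫ z : ℝ, z ^ 6 * phi z * Phi (l * z) = 15/2 := by
  have h := int_even_moment 3 l
  norm_num at h
  rw [h, int_phi6]; norm_num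

lemma even8 (l : ℝ) : ∫ z : ℝ, z ^ 8 * phi z * Phi (l * z) = 105/2 := by
  have h := int_even_moment 4 l
  norm_num at h
  rw [h, int_phi8]; norm_num

lemma odd3 (l : ℝ) : ∫ z : ℝ, z ^ 3 * phi z * Phi (l * z)
    = bconst * del l / 2 * ((3 + 2*l^2)/(1 + l^2)) := by
  have hL : (0:ℝ) < 1 + l^2 := by positivity
  rw [int_odd3, show l * ((2*Real.pi)⁻¹ * ((1/(2*((1+l^2)/2)) + 2)
      * Real.sqrt (Real.pi / ((1+l^2)/2))))
    = (l * ((2*Real.pi)⁻¹ * Real.sqrt (Real.pi / ((1+l^2)/2)))) * (1/(2*((1+l^2)/2)) + 2)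
      from by ring, odd_const,
    show (1/(2*((1+l^2)/2)) + 2 : ℝ) = (3+2*l^2)/(1+l^2) from by field_simp; ring]

lemma odd5 (l : ℝ) : ∫ z : ℝ, z ^ 5 * phi z * Phi (l * z)
    = bconst * del l / 2 * ((15 + 20*l^2 + 8*l^4)/(1 + l^2)^2) := by
  have hL : (0:ℝ) < 1 + l^2 := by positivity
  rw [int_odd5, show l * ((2*Real.pi)⁻¹ * ((3/(4*((1+l^2)/2)^2) + 4/(2*((1+l^2)/2)) + 8)
      * Real.sqrt (Real.pi / ((1+l^2)/2))))
    = (l * ((2*Real.pi)⁻¹ * Real.sqrt (Real.pi / ((1+l^2)/2))))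
      * (3/(4*((1+l^2)/2)^2) + 4/(2*((1+l^2)/2)) + 8) from by ring, odd_const,
    show (3/(4*((1+l^2)/2)^2) + 4/(2*((1+l^2)/2)) + 8 : ℝ) = (15+20*l^2+8*l^4)/(1+l^2)^2
      from by field_simp; ring]

theorem stmt_14 (a β l : ℝ) :
    ∫ z : ℝ, z ^ 2 * f a β l z
      = (1 + 15 * a * β + 3 * a ^ 2 / 2 + 105 * β ^ 2 / 2
          - bconst * del l * a * (3 + 2 * l ^ 2) / (1 + l ^ 2)
          - bconst * del l * β * (15 + 20 * l ^ 2 + 8 * l ^ 4) / (1 + l ^ 2) ^ 2)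
        / C a β l := by
  have hL : (0:ℝ) < 1 + l^2 := by positivity
  have hstep : (fun z : ℝ => z ^ 2 * f a β l z)
      = fun z : ℝ => (z ^ 2 * (((1 - a * z - β * z ^ 3) ^ 2 + 1) * phi z * Phi (l * z)))
          / C a β l := by
    funext z; rw [f]; ring
  rw [hstep, integral_div]
  congr 1
  -- expand the numerator
  have i2 := (integrable_pow_phi_Phi 2 l).const_mul 2
  have i3 := (integrable_pow_phi_Phi 3 l).const_mul (-2*a)
  have i4 := (integrable_pow_phi_Phi 4 l).const_mul (a^2)
  have i5 := (integrable_pow_phi_Phi 5 l).const_mul (-2*β)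
  have i6 := (integrable_pow_phi_Phi 6 l).const_mul (2*a*β)
  have i8 := (integrable_pow_phi_Phi 8 l).const_mul (β^2)
  have s23 : Integrable fun z : ℝ => 2 * (z^2 * phi z * Phi (l*z))
      + (-2*a) * (z^3 * phi z * Phi (l*z)) := by
    refine (i2.add i3).congr (Eventually.of_forall fun z => ?_); simp only [Pi.add_apply]
  have s234 : Integrable fun z : ℝ => 2 * (z^2 * phi z * Phi (l*z))
      + (-2*a) * (z^3 * phi z * Phi (l*z)) + a^2 * (z^4 * phi z * Phi (l*z)) := by
    refine (s23.add i4).congr (Eventually.of_forall fun z => ?_); simp only [Pi.add_apply]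
  have s2345 : Integrable fun z : ℝ => 2 * (z^2 * phi z * Phi (l*z))
      + (-2*a) * (z^3 * phi z * Phi (l*z)) + a^2 * (z^4 * phi z * Phi (l*z))
      + (-2*β) * (z^5 * phi z * Phi (l*z)) := by
    refine (s234.add i5).congr (Eventually.of_forall fun z => ?_); simp only [Pi.add_apply]
  have s23456 : Integrable fun z : ℝ => 2 * (z^2 * phi z * Phi (l*z))
      + (-2*a) * (z^3 * phi z * Phi (l*z)) + a^2 * (z^4 * phi z * Phi (l*z))
      + (-2*β) * (z^5 * phi z * Phi (l*z)) + (2*a*β) * (z^6 * phi z * Phi (l*z)) := by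
    refine (s2345.add i6).congr (Eventually.of_forall fun z => ?_); simp only [Pi.add_apply]
  have hexp : (fun z : ℝ => z ^ 2 * (((1 - a * z - β * z ^ 3) ^ 2 + 1) * phi z * Phi (l * z)))
      = fun z : ℝ => 2 * (z^2 * phi z * Phi (l*z))
      + (-2*a) * (z^3 * phi z * Phi (l*z)) + a^2 * (z^4 * phi z * Phi (l*z))
      + (-2*β) * (z^5 * phi z * Phi (l*z)) + (2*a*β) * (z^6 * phi z * Phi (l*z))
      + β^2 * (z^8 * phi z * Phi (l*z)) := by
    funext z; ring
  rw [hexp, integral_add s23456 i8, integral_add s2345 i6, integral_add s234 i5,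
    integral_add s23 i4, integral_add i2 i3,
    integral_const_mul, integral_const_mul, integral_const_mul, integral_const_mul,
    integral_const_mul, integral_const_mul,
    even2, even4, even6, even8, odd3 l, odd5 l]
  field_simp
  ring
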